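/- In the latent Gaussian model, for each index j, the response z_j is conditionally independent of all other components of the joint Gaussian vector (y_1,…,y_n, z_1,…,z_n) given y_j. Consequently, for any component w of (y, z) with w ≠ z_j and any collection G of components of (y, z) not containing w, the conditional distribution of w given (x_G, y_j) coincides with the conditional distribution of w given (x_G, y_j, z_j); in particular Var(w | x_G, y_j) = Var(w | x_G, y_j, z_j). (Conditioning on a latent variable y_j is equivalent to conditioning on both y_j and its response z_j; this is the key lemma in the proof of Proposition 2.) -/

import Mathlib

open MeasureTheory Real Finset Matrix

noncomputable section

/-- Density of the one-dimensional normal distribution `N(μ, v)` evaluated at `t`. -/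
def gauss1 (μ v t : ℝ) : ℝ :=
  (Real.sqrt (2 * π * v))⁻¹ * Real.exp (-((t - μ) ^ 2) / (2 * v))

variable {ι : Type*} [Fintype ι] [DecidableEq ι]

/-- Joint density of the multivariate normal distribution `N(μ, K)` on `ι → ℝ`. -/
def gaussDensity (μ : ι → ℝ) (K : Matrix ι ι ℝ) (x : ι → ℝ) : ℝ :=
  (Real.sqrt ((2 * π) ^ (Fintype.card ι) * K.det))⁻¹ *
    Real.exp (-(dotProduct (x - μ) (K⁻¹ *ᵥ (x - μ))) / 2)

/-- Submatrix of `K` with rows and columns in the index set `G`. -/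
def subm (K : Matrix ι ι ℝ) (G : Finset ι) : Matrix G G ℝ :=
  Matrix.of fun j k => K j.1 k.1

/-- Gaussian conditional mean `E(x i | x_G)` for `x ~ N(μ, K)`, as a function of `x`. -/
def condMean (μ : ι → ℝ) (K : Matrix ι ι ℝ) (i : ι) (G : Finset ι) (x : ι → ℝ) : ℝ :=
  μ i + dotProduct (fun j : G => K i j.1)
    ((subm K G)⁻¹ *ᵥ fun j : G => x j.1 - μ j.1)

/-- Gaussian conditional variance `Var(x i | x_G)` for `x ~ N(μ, K)`
(it does not depend on the value of `x_G`). -/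
def condVar (K : Matrix ι ι ℝ) (i : ι) (G : Finset ι) : ℝ :=
  K i i - dotProduct (fun j : G => K i j.1)
    ((subm K G)⁻¹ *ᵥ fun j : G => K j.1 i)

/-- Gaussian conditional covariance `Cov(x a, x b | x_G)` for `x ~ N(0, K)`. -/
def condCov (K : Matrix ι ι ℝ) (a b : ι) (G : Finset ι) : ℝ :=
  K a b - dotProduct (fun j : G => K a j.1)
    ((subm K G)⁻¹ *ᵥ fun j : G => K j.1 b)

/-- The exact Gaussian conditional density `f(x i | x_G)` for `x ~ N(μ, K)`. -/
def condDens (μ : ι → ℝ) (K : Matrix ι ι ℝ) (i : ι) (G : Finset ι) (x : ι → ℝ) : ℝ :=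
  gauss1 (condMean μ K i G x) (condVar K i G) (x i)

/-- The general Vecchia approximation `f̂(x) = ∏ i, f(x i | x_{g i})` of `N(μ, K)`. -/
def vecchia (μ : ι → ℝ) (K : Matrix ι ι ℝ) (g : ι → Finset ι) (x : ι → ℝ) : ℝ :=
  ∏ i, condDens μ K i (g i) x

/-- Kullback–Leibler divergence `KL(f ‖ g) = ∫ f log(f/g)` between densities on `ι → ℝ`. -/
def KLdiv (f g : (ι → ℝ) → ℝ) : ℝ :=
  ∫ x : ι → ℝ, f x * Real.log (f x / g x)


/-- Covariance matrix of the joint Gaussian vector `(y, z)` in the latent model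
`y ~ N(0, K)`, `z = y + ε`, `ε ~ N(0, D)` independent of `y`: `Sum.inl i` indexes `yᵢ` and
`Sum.inr i` indexes `zᵢ`. -/
def latentCov {n : ℕ} (K D : Matrix (Fin n) (Fin n) ℝ) :
    Matrix (Fin n ⊕ Fin n) (Fin n ⊕ Fin n) ℝ :=
  Matrix.fromBlocks K K K (K + D)


section Helpers

set_option linter.unusedSectionVars false

lemma posdef_symm_entry {S : Matrix ι ι ℝ} (hS : S.IsHermitian) (i k : ι) : S i k = S k i := by
  have := congrFun (congrFun hS i) k
  simpa [Matrix.conjTranspose_apply] using this.symm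

lemma subm_posDef {S : Matrix ι ι ℝ} (hS : S.PosDef) (G : Finset ι) :
    (subm S G).PosDef := by
  refine posDef_iff_dotProduct_mulVec.mpr ⟨?_, ?_⟩
  · ext i k
    simp only [subm, Matrix.conjTranspose_apply, Matrix.of_apply, star_trivial]
    exact posdef_symm_entry hS.1 k.1 i.1
  · intro x hx
    set x' : ι → ℝ := fun u => if h : u ∈ G then x ⟨u, h⟩ else 0 with hx'def
    have hx0 : x' ≠ 0 := by
      obtain ⟨k, hk⟩ := Function.ne_iff.mp hx
      intro h0
      apply hk
      have := congrFun h0 k.1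
      simpa [x', k.2] using this
    have hpos := hS.dotProduct_mulVec_pos hx0
    have inner : ∀ i : ι, (S *ᵥ x') i = ∑ k : G, S i k.1 * x k := by
      intro i
      rw [Matrix.mulVec, dotProduct,
        ← Finset.sum_subset G.subset_univ (fun k _ hk => by simp [x', hk]),
        ← Finset.sum_coe_sort G (fun k => S i k * x' k)]
      exact Fintype.sum_congr _ _ fun k => by simp [x', k.2]
    have outer : dotProduct x' (S *ᵥ x') = dotProduct x ((subm S G) *ᵥ x) := by
      rw [dotProduct,
        ← Finset.sum_subset G.subset_univ (fun k _ hk => by simp [x', hk]),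
        ← Finset.sum_coe_sort G (fun k => x' k * (S *ᵥ x') k)]
      rw [dotProduct]
      refine Fintype.sum_congr _ _ fun i => ?_
      rw [inner]
      simp [x', i.2, subm, Matrix.mulVec, dotProduct]
    calc (0:ℝ) < dotProduct (star x') (S *ᵥ x') := hpos
    _ = dotProduct x ((subm S G) *ᵥ x) := by rw [star_trivial]; exact outer
    _ = dotProduct (star x) ((subm S G) *ᵥ x) := by rw [star_trivial]

lemma swap_dot (P : Matrix ι ι ℝ) (hP : Pᵀ = P) (r x : ι → ℝ) :
    dotProduct r (P⁻¹ *ᵥ x) = dotProduct (P⁻¹ *ᵥ r) x := by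
  rw [Matrix.dotProduct_mulVec, ← Matrix.mulVec_transpose, Matrix.transpose_nonsing_inv, hP]

lemma key_insert (S : Matrix ι ι ℝ) (hS : S.PosDef)
    (a t : ι) (d : ℝ) (hd : d ≠ 0)
    (hcol : ∀ v, v ≠ a → S v a = S v t) (hdiag : S a a = S a t + d)
    (w : ι) (hw : w ≠ a) (G₁ : Finset ι) (ht : t ∈ G₁) :
    condVar S w G₁ = condVar S w (insert a G₁) ∧
      ∀ x, condMean 0 S w G₁ x = condMean 0 S w (insert a G₁) x := by
  by_cases ha : a ∈ G₁
  · rw [Finset.insert_eq_self.mpr ha]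
    exact ⟨rfl, fun _ => rfl⟩
  set G₂ := insert a G₁ with hG₂
  set M := subm S G₂ with hMdef
  set N := subm S G₁ with hNdef
  have hsymm : ∀ i k : ι, S i k = S k i := posdef_symm_entry hS.1
  have hM := subm_posDef hS G₂
  have hN := subm_posDef hS G₁
  have hMsymm : Mᵀ = M := by
    ext i k; simp only [Matrix.transpose_apply, hMdef, subm, Matrix.of_apply]; exact hsymm _ _
  have hNsymm : Nᵀ = N := by
    ext i k; simp only [Matrix.transpose_apply, hNdef, subm, Matrix.of_apply]; exact hsymm _ _
  have hMdet : IsUnit M.det := isUnit_iff_ne_zero.mpr hM.det_pos.ne'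
  have hNdet : IsUnit N.det := isUnit_iff_ne_zero.mpr hN.det_pos.ne'
  have haG₂ : a ∈ G₂ := Finset.mem_insert_self a G₁
  set aa : {x // x ∈ G₂} := ⟨a, haG₂⟩ with haa
  set ttt : {x // x ∈ G₂} := ⟨t, Finset.mem_insert_of_mem ht⟩ with httt
  set u : {x // x ∈ G₂} → ℝ := fun v => (if v = aa then 1 else 0) - (if v = ttt then 1 else 0)
    with hu
  have hMu : ∀ v : {x // x ∈ G₂}, (M *ᵥ u) v = if v = aa then d else 0 := by
    intro v
    have : (M *ᵥ u) v = S v.1 a - S v.1 t := by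
      simp [hu, Matrix.mulVec, dotProduct, mul_sub, mul_ite,
        Finset.sum_sub_distrib, hMdef, subm, haa, httt]
    rw [this]
    by_cases hv : v = aa
    · subst hv; simp [haa, hdiag]
    · have : v.1 ≠ a := fun h => hv (Subtype.ext h)
      simp [hv, hcol v.1 this]
  set b : {x // x ∈ G₂} → ℝ := M⁻¹ *ᵥ (fun v => S v.1 w) with hb
  have hMb : M *ᵥ b = fun v => S v.1 w := by
    rw [hb, Matrix.mulVec_mulVec, Matrix.mul_nonsing_inv _ hMdet, Matrix.one_mulVec]
  have hba : b aa = 0 := by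
    have h1 : dotProduct (M *ᵥ u) b = d * b aa := by
      rw [dotProduct]
      rw [Fintype.sum_congr _ _ (fun v => by rw [hMu v])]
      simp [ite_mul]
    have h2 : dotProduct (M *ᵥ u) b = dotProduct u (M *ᵥ b) := by
      rw [dotProduct_comm, Matrix.dotProduct_mulVec, ← Matrix.mulVec_transpose, hMsymm,
        dotProduct_comm]
    have h3 : dotProduct u (M *ᵥ b) = 0 := by
      rw [hMb]
      have : S a w - S t w = 0 := by
        rw [hsymm a w, hsymm t w, hcol w hw]; ring
      simpa [hu, dotProduct, sub_mul, ite_mul, Finset.sum_sub_distrib, haa, httt] using this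
    have : d * b aa = 0 := by rw [← h1, h2, h3]
    exact (mul_eq_zero.mp this).resolve_left hd
  set b₁ : {x // x ∈ G₁} → ℝ := fun v => b ⟨v.1, Finset.mem_insert_of_mem v.2⟩ with hb₁def
  set b₀ : ι → ℝ := fun v => if h : v ∈ G₂ then b ⟨v, h⟩ else 0 with hb₀def
  have hb₀ : ∀ k : {x // x ∈ G₂}, b k = b₀ k.1 := fun k => by simp [hb₀def, k.2]
  have hb₀a : b₀ a = 0 := by
    rw [hb₀def]; simpa [haG₂] using hba
  have hb₁ : ∀ k : {x // x ∈ G₁}, b₁ k = b₀ k.1 := fun k => by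
    simp [hb₁def, hb₀def, (Finset.mem_insert_of_mem k.2 : k.1 ∈ G₂)]
    intro h; exact absurd (Finset.mem_insert_of_mem k.2 : k.1 ∈ G₂) h
  have hsum : ∀ f : ι → ℝ, (∑ v : {x // x ∈ G₂}, f v.1 * b v)
      = ∑ v : {x // x ∈ G₁}, f v.1 * b₁ v := by
    intro f
    have e1 : (∑ v : {x // x ∈ G₂}, f v.1 * b v) = ∑ v ∈ G₂, f v * b₀ v := by
      rw [← Finset.sum_coe_sort G₂ (fun v => f v * b₀ v)]
      exact Fintype.sum_congr _ _ (fun v => by rw [hb₀ v])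
    have e2 : (∑ v : {x // x ∈ G₁}, f v.1 * b₁ v) = ∑ v ∈ G₁, f v * b₀ v := by
      rw [← Finset.sum_coe_sort G₁ (fun v => f v * b₀ v)]
      exact Fintype.sum_congr _ _ (fun v => by rw [hb₁ v])
    rw [e1, e2, hG₂, Finset.sum_insert ha, hb₀a, mul_zero, zero_add]
  have hNb₁ : N *ᵥ b₁ = fun v : {x // x ∈ G₁} => S v.1 w := by
    funext v
    have h5 := congrFun hMb ⟨v.1, Finset.mem_insert_of_mem v.2⟩
    have h6 : (N *ᵥ b₁) v = ∑ k : {x // x ∈ G₁}, S v.1 k.1 * b₁ k := by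
      simp [Matrix.mulVec, dotProduct, hNdef, subm]
    have h7 : (M *ᵥ b) ⟨v.1, Finset.mem_insert_of_mem v.2⟩
        = ∑ k : {x // x ∈ G₂}, S v.1 k.1 * b k := by
      simp [Matrix.mulVec, dotProduct, hMdef, subm]
    rw [h6, ← hsum (fun z => S v.1 z), ← h7, h5]
  have hb₁inv : b₁ = N⁻¹ *ᵥ (fun v : {x // x ∈ G₁} => S v.1 w) := by
    rw [← hNb₁, Matrix.mulVec_mulVec, Matrix.nonsing_inv_mul _ hNdet, Matrix.one_mulVec]
  constructor
  · show condVar S w G₁ = condVar S w G₂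
    rw [condVar, condVar, ← hMdef, ← hNdef, ← hb, ← hb₁inv]
    rw [dotProduct, dotProduct]
    rw [hsum (fun z => S w z)]
  · intro x
    show condMean 0 S w G₁ x = condMean 0 S w G₂ x
    rw [condMean, condMean, ← hMdef, ← hNdef]
    simp only [Pi.zero_apply, sub_zero, zero_add]
    have hrc₂ : (fun v : {x // x ∈ G₂} => S w v.1) = (fun v : {x // x ∈ G₂} => S v.1 w) := by
      funext v; exact hsymm w v.1
    have hrc₁ : (fun v : {x // x ∈ G₁} => S w v.1) = (fun v : {x // x ∈ G₁} => S v.1 w) := by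
      funext v; exact hsymm w v.1
    rw [swap_dot M hMsymm, swap_dot N hNsymm, hrc₂, hrc₁, ← hb, ← hb₁inv]
    rw [dotProduct, dotProduct]
    have e1 : (∑ v : {x // x ∈ G₂}, b v * x v.1) = ∑ v : {x // x ∈ G₂}, x v.1 * b v :=
      Fintype.sum_congr _ _ (fun v => mul_comm _ _)
    have e2 : (∑ v : {x // x ∈ G₁}, b₁ v * x v.1) = ∑ v : {x // x ∈ G₁}, x v.1 * b₁ v :=
      Fintype.sum_congr _ _ (fun v => mul_comm _ _)
    rw [e1, e2, hsum x]

lemma condCov_singleton (S : Matrix ι ι ℝ) (a b t : ι) (c : ℝ) (hc : S t t = c) (hc0 : c ≠ 0)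
    (hat : S a t = c) :
    condCov S a b {t} = S a b - S t b := by
  haveI hu : Unique {x // x ∈ ({t} : Finset ι)} :=
    ⟨⟨⟨t, Finset.mem_singleton_self _⟩⟩, fun v => Subtype.ext (Finset.mem_singleton.mp v.2)⟩
  have hinv : (subm S ({t} : Finset ι))⁻¹ = Matrix.of (fun _ _ => c⁻¹) := by
    apply Matrix.inv_eq_right_inv
    ext i k
    have hi : i.1 = t := Finset.mem_singleton.mp i.2
    have hik : i = k := Subtype.ext (hi.trans (Finset.mem_singleton.mp k.2).symm)
    have hd : (default : {x // x ∈ ({t} : Finset ι)}).1 = t :=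
      Finset.mem_singleton.mp (default : {x // x ∈ ({t} : Finset ι)}).2
    rw [Matrix.mul_apply, Fintype.sum_unique]
    simp only [subm, Matrix.of_apply, hd]
    rw [hi, hc, mul_inv_cancel₀ hc0, hik, Matrix.one_apply_eq]
  rw [condCov, hinv]
  rw [dotProduct, Fintype.sum_unique, Matrix.mulVec, dotProduct,
    Fintype.sum_unique]
  have hd : (default : {x // x ∈ ({t} : Finset ι)}).1 = t :=
    Finset.mem_singleton.mp (default : {x // x ∈ ({t} : Finset ι)}).2
  simp only [hd, Matrix.of_apply, hat]
  field_simp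

end Helpers

lemma latentCov_posDef {n : ℕ} (K D : Matrix (Fin n) (Fin n) ℝ) (hK : K.PosDef)
    (hDdiag : ∀ i j, i ≠ j → D i j = 0) (hDpos : ∀ i, 0 < D i i) :
    (latentCov K D).PosDef := by
  have hDd : D = Matrix.diagonal (fun i => D i i) := by
    ext i k
    by_cases h : i = k
    · subst h; simp
    · simp [Matrix.diagonal, h, hDdiag i k h]
  have hDpd : D.PosDef := by
    rw [hDd]; exact Matrix.posDef_diagonal_iff.mpr hDpos
  have hKs : ∀ i k, K i k = K k i := fun i k => by
    have := congrFun (congrFun hK.1 i) k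
    simpa [Matrix.conjTranspose_apply] using this.symm
  refine posDef_iff_dotProduct_mulVec.mpr ⟨?_, ?_⟩
  · ext i k
    cases i <;> cases k <;>
      simp [latentCov, Matrix.conjTranspose_apply, Matrix.fromBlocks, hKs _ _] <;>
    · rename_i i k
      by_cases h : i = k
      · subst h; rfl
      · rw [hDdiag i k h, hDdiag k i (Ne.symm h)]
  · intro x hx
    set p := x ∘ Sum.inl with hp
    set q := x ∘ Sum.inr with hq
    have hform : dotProduct (star x) (latentCov K D *ᵥ x)
        = dotProduct (p + q) (K *ᵥ (p + q)) + dotProduct q (D *ᵥ q) := by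
      rw [star_trivial]
      conv_lhs => rw [← Sum.elim_comp_inl_inr x]
      rw [latentCov, Matrix.fromBlocks_mulVec, sumElim_dotProduct_sumElim]
      simp only [Matrix.mulVec_add, Matrix.add_mulVec, dotProduct_add,
        add_dotProduct, Sum.elim_comp_inl, Sum.elim_comp_inr, ← hp, ← hq]
      ring
    rw [hform]
    by_cases hq0 : q = 0
    · have hp0 : p ≠ 0 := by
        intro h0
        apply hx
        funext i
        cases i with
        | inl i => exact congrFun h0 i
        | inr i => exact congrFun hq0 i
      have h1 := hK.dotProduct_mulVec_pos hp0
      rw [star_trivial] at h1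
      simpa [hq0] using h1
    · have h1 := hDpd.dotProduct_mulVec_pos hq0
      rw [star_trivial] at h1
      have h2 := hK.posSemidef.dotProduct_mulVec_nonneg (p + q)
      rw [star_trivial] at h2
      linarith


/-- **Conditional independence of a response given its latent variable.** In the latent
Gaussian model, `z j` is conditionally independent of every other component of `(y, z)`
given `y j` (zero partial covariance), and consequently conditioning any component `w ≠ z j`
on `(x_G, y j)` is the same as conditioning on `(x_G, y j, z j)`: both the conditional
variance and the conditional mean are unchanged. -/
theorem response_conditionally_independent_given_latent
    {n : ℕ} (K D : Matrix (Fin n) (Fin n) ℝ) (hK : K.PosDef)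
    (hDdiag : ∀ i j, i ≠ j → D i j = 0) (hDpos : ∀ i, 0 < D i i)
    (j : Fin n) :
    (∀ w : Fin n ⊕ Fin n, w ≠ Sum.inr j →
        condCov (latentCov K D) (Sum.inr j) w {Sum.inl j} = 0) ∧
      ∀ w : Fin n ⊕ Fin n, w ≠ Sum.inr j → ∀ G : Finset (Fin n ⊕ Fin n), w ∉ G →
        condVar (latentCov K D) w (insert (Sum.inl j) G) =
            condVar (latentCov K D) w (insert (Sum.inr j) (insert (Sum.inl j) G)) ∧
          ∀ x : Fin n ⊕ Fin n → ℝ,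
            condMean 0 (latentCov K D) w (insert (Sum.inl j) G) x =
              condMean 0 (latentCov K D) w (insert (Sum.inr j) (insert (Sum.inl j) G)) x := by
  set S := latentCov K D with hSdef
  have hS : S.PosDef := latentCov_posDef K D hK hDdiag hDpos
  have hKjj : 0 < K j j := by
    have h := hK.dotProduct_mulVec_pos (x := Pi.single j 1) (fun h => by
      have h1 := congrFun h j
      rw [Pi.single_eq_same] at h1
      exact one_ne_zero h1)
    simpa [dotProduct, Matrix.mulVec, Pi.single_apply, mul_ite] using h
  have hSll : ∀ i k, S (Sum.inl i) (Sum.inl k) = K i k := fun i k => rfl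
  have hSlr : ∀ i k, S (Sum.inl i) (Sum.inr k) = K i k := fun i k => rfl
  have hSrl : ∀ i k, S (Sum.inr i) (Sum.inl k) = K i k := fun i k => rfl
  have hSrr : ∀ i k, S (Sum.inr i) (Sum.inr k) = K i k + D i k := fun i k => rfl
  have hdiff : ∀ w : Fin n ⊕ Fin n, w ≠ Sum.inr j → S (Sum.inr j) w - S (Sum.inl j) w = 0 := by
    intro w hw
    cases w with
    | inl i => rw [hSrl, hSll]; ring
    | inr i =>
        have hij : j ≠ i := fun h => hw (by rw [h])
        rw [hSrr, hSlr, hDdiag j i hij]; ring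
  constructor
  · intro w hw
    rw [condCov_singleton S (Sum.inr j) w (Sum.inl j) (K j j) (hSll j j) hKjj.ne' (hSrl j j)]
    have := hdiff w hw
    linarith
  · intro w hw G hG
    have hcol : ∀ v : Fin n ⊕ Fin n, v ≠ Sum.inr j →
        S v (Sum.inr j) = S v (Sum.inl j) := by
      intro v hv
      cases v with
      | inl i => rw [hSlr, hSll]
      | inr i =>
          have hij : i ≠ j := fun h => hv (by rw [h])
          rw [hSrr, hSrl, hDdiag i j hij, add_zero]
    have hdiag2 : S (Sum.inr j) (Sum.inr j) = S (Sum.inr j) (Sum.inl j) + D j j := by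
      rw [hSrr, hSrl]
    have := key_insert S hS (Sum.inr j) (Sum.inl j) (D j j) (hDpos j).ne' hcol hdiag2
      w hw (insert (Sum.inl j) G) (Finset.mem_insert_self _ _)
    exact ⟨this.1, this.2⟩

end
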